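/- Lower bound for splits induced by extended patterns (Theorem 2 of the paper, abstract form): let A and B be finite multisets of reals. For every sub-multiset S ⊆ A with |S| = k (0 < k < |A|), TSS(A∖S) + TSS(B∪S) ≥ min over k' ∈ {1,...,|A|−1} and choice of S' being the k' largest or k' smallest elements of A, of TSS(A∖S') + TSS(B∪S'). Consequently if all support sets of descendant patterns are sub-multisets obtained by removing some S from A and adding it to B, the displayed minimum bounds their split criterion from below. -/

import Mathlib

lemma quad_le_max (p q a b u v s : ℝ) (hp : 0 ≤ p) (hq : 0 ≤ q)
    (h1 : u ≤ s) (h2 : s ≤ v) :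
    (a - s)^2 * p + (b + s)^2 * q ≤
      max ((a - u)^2 * p + (b + u)^2 * q) ((a - v)^2 * p + (b + v)^2 * q) := by
  by_contra h
  push_neg at h
  rw [max_lt_iff] at h
  obtain ⟨h3, h4⟩ := h
  have hvs : (0:ℝ) ≤ v - s := by linarith
  have hsu : (0:ℝ) ≤ s - u := by linarith
  have hvu : (0:ℝ) ≤ v - u := by linarith
  have key : (v-u)*((a-s)^2*p+(b+s)^2*q) ≤
      (v-s)*((a-u)^2*p+(b+u)^2*q) + (s-u)*((a-v)^2*p+(b+v)^2*q) := by
    nlinarith [mul_nonneg (mul_nonneg (mul_nonneg hp hvs) hsu) hvu,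
      mul_nonneg (mul_nonneg (mul_nonneg hq hvs) hsu) hvu]
  rcases eq_or_lt_of_le hvs with hvs' | hvs'
  · rcases eq_or_lt_of_le hsu with hsu' | hsu'
    · have : u = s := by linarith
      rw [this] at h3; linarith
    · nlinarith [mul_le_mul_of_nonneg_left h3.le hvs,
        mul_lt_mul_of_pos_left h4 hsu']
  · nlinarith [mul_lt_mul_of_pos_left h3 hvs',
      mul_le_mul_of_nonneg_left h4.le hsu]

lemma take_sum_le_of_sublist : ∀ {s l : List ℝ}, s.Sublist l → l.Pairwise (· ≤ ·) →
    (l.take s.length).sum ≤ s.sum := by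
  intro s l h
  induction h with
  | slnil => simp
  | @cons s' l' a h ih =>
    intro hsort
    have hsort' : l'.Pairwise (· ≤ ·) := hsort.of_cons
    have ih' := ih hsort'
    rcases Nat.eq_zero_or_pos s'.length with h0 | h0
    · rw [List.length_eq_zero_iff] at h0; subst h0; simp
    · have hk : s'.length ≤ l'.length := h.length_le
      obtain ⟨k, hk'⟩ : ∃ k, s'.length = k + 1 := ⟨s'.length - 1, by omega⟩
      rw [hk', List.take_succ_cons]
      have hkl : k < l'.length := by omega
      have htake : l'.take (k+1) = l'.take k ++ [l'[k]] := by
        rw [List.take_succ, List.getElem?_eq_getElem hkl]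
        rfl
      have hmem : l'[k] ∈ l' := List.getElem_mem hkl
      have ha : a ≤ l'[k] := (List.pairwise_cons.mp hsort).1 _ hmem
      rw [hk', htake] at ih'
      simp only [List.sum_cons, List.sum_append, List.sum_nil] at *
      linarith
  | @cons_cons s' l' a h ih =>
    intro hsort
    simp only [List.length_cons, List.take_succ_cons, List.sum_cons]
    have := ih hsort.of_cons
    linarith

lemma sum_le_drop_of_sublist : ∀ {s l : List ℝ}, s.Sublist l → l.Pairwise (· ≤ ·) →
    s.sum ≤ (l.drop (l.length - s.length)).sum := by
  intro s l h
  induction h with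
  | slnil => simp
  | @cons s' l' a h ih =>
    intro hsort
    have hk : s'.length ≤ l'.length := h.length_le
    have heq : (a :: l').length - s'.length = (l'.length - s'.length) + 1 := by
      simp only [List.length_cons]; omega
    rw [heq, List.drop_succ_cons]
    exact ih hsort.of_cons
  | @cons_cons s' l' a h ih =>
    intro hsort
    have hk : s'.length ≤ l'.length := h.length_le
    rcases eq_or_lt_of_le hk with heq | hlt
    · have hsl : s' = l' := h.eq_of_length heq
      subst hsl
      simp [Nat.sub_self]
    · have h1 : (a :: l').length - (a :: s').length = l'.length - s'.length := by
        simp only [List.length_cons]; omega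
      rw [h1]
      obtain ⟨m, hm⟩ : ∃ m, l'.length - s'.length = m + 1 := ⟨l'.length - s'.length - 1, by omega⟩
      have hml : m < l'.length := by omega
      rw [hm, List.drop_succ_cons]
      have hdm : l'.drop m = l'[m] :: l'.drop (m+1) := List.drop_eq_getElem_cons hml
      rw [hdm]
      have ih' := ih hsort.of_cons
      rw [hm] at ih'
      have hmem : l'[m] ∈ l' := List.getElem_mem hml
      have ha : a ≤ l'[m] := (List.pairwise_cons.mp hsort).1 _ hmem
      simp only [List.sum_cons] at *
      linarith

/-- Total sum of squares (with the 1/2 factor) of a finite multiset of reals;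
`tss 0 = 0`. -/
noncomputable def tss (X : Multiset ℝ) : ℝ :=
  (1 / 2) * (X.map (fun x => (x - X.sum / X.card) ^ 2)).sum
lemma tss_eq (X : Multiset ℝ) :
    tss X = (1/2) * ((X.map (fun x => x^2)).sum - X.sum^2 / X.card) := by
  rcases Nat.eq_zero_or_pos X.card with h0 | h0
  · rw [Multiset.card_eq_zero] at h0; subst h0; simp [tss]
  · have hc : (X.card : ℝ) ≠ 0 := Nat.cast_ne_zero.mpr (by omega)
    have hmap : X.map (fun x => (x - X.sum / X.card)^2)
        = X.map (fun x => x^2 - (2*(X.sum / X.card))*x + (X.sum / X.card)^2) := by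
      apply Multiset.map_congr rfl
      intro x _; ring
    have hsum : (X.map (fun x => x^2 - (2*(X.sum / X.card))*x + (X.sum / X.card)^2)).sum
        = (X.map (fun x => x^2)).sum - (2*(X.sum / X.card))*X.sum
          + X.card * (X.sum / X.card)^2 := by
      rw [Multiset.sum_map_add, Multiset.sum_map_sub, Multiset.sum_map_mul_left]
      simp [Multiset.map_id', mul_comm]
    rw [tss, hmap, hsum]
    field_simp
    ring

lemma key (A B T : Multiset ℝ) (hT : T ≤ A) :
    tss (A - T) + tss (B + T)
      = (1/2)*(((A.map (fun x => x^2)).sum + (B.map (fun x => x^2)).sum)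
        - ((A.sum - T.sum)^2/((A.card:ℝ) - T.card)
          + (B.sum + T.sum)^2/((B.card:ℝ) + T.card))) := by
  have hA : A - T + T = A := tsub_add_cancel_of_le hT
  have hsum : (A - T).sum = A.sum - T.sum := by
    have h := congrArg Multiset.sum hA
    rw [Multiset.sum_add] at h; linarith
  have hq : ((A - T).map (fun x => x^2)).sum
      = (A.map (fun x => x^2)).sum - (T.map (fun x => x^2)).sum := by
    have h := congrArg (fun M => (Multiset.map (fun x : ℝ => x^2) M).sum) hA
    simp only [Multiset.map_add, Multiset.sum_add] at h; linarith
  have hcard : (((A - T).card : ℕ) : ℝ) = (A.card:ℝ) - T.card := by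
    have h1 := congrArg Multiset.card hA
    rw [Multiset.card_add] at h1
    have : T.card ≤ A.card := Multiset.card_le_card hT
    push_cast [← h1]; ring
  rw [tss_eq, tss_eq, hsum, hq, hcard, Multiset.sum_add, Multiset.card_add,
    Multiset.map_add, Multiset.sum_add]
  push_cast
  ring

/-- Lower bound for splits induced by extended patterns: for every
sub-multiset `S ⊆ A` with `0 < |S| < |A|`, the criterion
`TSS(A∖S) + TSS(B∪S)` is bounded below by the minimum, over sizes `k'` and
over choosing the `k'` smallest or `k'` largest elements of `A`, of the same
quantity. -/
theorem tss_split_lower_bound (A B S : Multiset ℝ)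
    (hS : S ≤ A) (hk0 : 0 < S.card) (hkn : S.card < A.card) :
    ((Finset.Icc 1 (A.card - 1)).inf'
        (Finset.nonempty_Icc.mpr (by omega))
        (fun k' =>
          min
            (tss (A - ↑((A.sort (· ≤ ·)).take k'))
              + tss (B + ↑((A.sort (· ≤ ·)).take k')))
            (tss (A - ↑((A.sort (· ≤ ·)).drop (A.card - k')))
              + tss (B + ↑((A.sort (· ≤ ·)).drop (A.card - k'))))))
      ≤ tss (A - S) + tss (B + S) := by
  set n := A.card with hn
  set k := S.card with hk
  set l := A.sort (· ≤ ·) with hl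
  have hmem : k ∈ Finset.Icc 1 (n - 1) := Finset.mem_Icc.mpr ⟨hk0, by omega⟩
  refine le_trans (Finset.inf'_le _ hmem) ?_
  -- basic facts about l
  have hsort : l.Pairwise (· ≤ ·) := A.pairwise_sort _
  have hcl : (↑l : Multiset ℝ) = A := A.sort_eq _
  have hll : l.length = n := by
    rw [hn, ← hcl]; rfl
  -- sorted list of S is a sublist of l
  set s := S.sort (· ≤ ·) with hs
  have hcs : (↑s : Multiset ℝ) = S := S.sort_eq _
  have hssort : s.Pairwise (· ≤ ·) := S.pairwise_sort _
  have hsub : s.Sublist l := by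
    have hle : (↑s : Multiset ℝ) ≤ ↑l := by rw [hcs, hcl]; exact hS
    rw [Multiset.coe_le] at hle
    obtain ⟨t, ht1, ht2⟩ := hle
    have htsort : t.Pairwise (· ≤ ·) := hsort.sublist ht2
    have : t = s := List.Perm.eq_of_pairwise' htsort hssort ht1
    rwa [← this]
  have hslen : s.length = k := by rw [hk, ← hcs]; rfl
  have hssum : s.sum = S.sum := by rw [← hcs]; rfl
  -- the two extreme sub-multisets
  have hT1le : (↑(l.take k) : Multiset ℝ) ≤ A := by
    rw [← hcl]; exact Multiset.coe_le.mpr (l.take_sublist k).subperm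
  have hT2le : (↑(l.drop (n - k)) : Multiset ℝ) ≤ A := by
    rw [← hcl]; exact Multiset.coe_le.mpr (l.drop_sublist (n - k)).subperm
  have hT1card : Multiset.card (↑(l.take k) : Multiset ℝ) = k := by
    simp [Multiset.coe_card, List.length_take, hll]; omega
  have hT2card : Multiset.card (↑(l.drop (n - k)) : Multiset ℝ) = k := by
    simp [Multiset.coe_card, List.length_drop, hll]; omega
  have hT1sum : (↑(l.take k) : Multiset ℝ).sum = (l.take k).sum := rfl
  have hT2sum : (↑(l.drop (n - k)) : Multiset ℝ).sum = (l.drop (n - k)).sum := rfl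
  -- sum bounds
  have hu : (l.take k).sum ≤ S.sum := by
    have := take_sum_le_of_sublist hsub hsort
    rwa [hslen, hssum] at this
  have hv : S.sum ≤ (l.drop (n - k)).sum := by
    have := sum_le_drop_of_sublist hsub hsort
    rwa [hslen, hssum, hll] at this
  -- rewrite using the key formula
  have hScard : S.card = k := rfl
  rw [key A B S hS, key A B _ hT1le, key A B _ hT2le, hT1card, hT2card, hT1sum, hT2sum,
    hScard]
  -- reduce to the quadratic lemma
  have hd1 : (0:ℝ) ≤ ((n:ℝ) - k)⁻¹ := by
    apply inv_nonneg.mpr; have : (k:ℝ) ≤ n := by exact_mod_cast hkn.le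
    linarith
  have hd2 : (0:ℝ) ≤ ((B.card:ℝ) + k)⁻¹ := by positivity
  have hmax := quad_le_max ((n:ℝ) - k)⁻¹ ((B.card:ℝ) + k)⁻¹ A.sum B.sum
    (l.take k).sum (l.drop (n - k)).sum S.sum hd1 hd2 hu hv
  rw [← hn]
  simp only [div_eq_mul_inv]
  rcases le_total ((A.sum - (l.take k).sum)^2 * ((n:ℝ) - k)⁻¹
      + (B.sum + (l.take k).sum)^2 * ((B.card:ℝ) + k)⁻¹)
    ((A.sum - (l.drop (n - k)).sum)^2 * ((n:ℝ) - k)⁻¹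
      + (B.sum + (l.drop (n - k)).sum)^2 * ((B.card:ℝ) + k)⁻¹) with hc | hc
  · rw [max_eq_right hc] at hmax
    exact le_trans (min_le_right _ _) (by linarith)
  · rw [max_eq_left hc] at hmax
    exact le_trans (min_le_left _ _) (by linarith)
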